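/- Let S be a finite set of candidate smooth nodes and CLI a finite set of clients. Given a placement x : S → {0,1} with at least one n such that x n = 1, define for each client m the assignment y m n = 1 iff n is a chosen argmin over {n' : x n' = 1} of ω·(Σ_{l : x l = 1} δ n' l) + ζ m n' (and 0 otherwise). Then for any other assignment y' : CLI → S → {0,1} satisfying Σ_n y' m n = 1 and y' m n ≤ x n for all m, the balance cost C_B(x, y) = Σ_m Σ_n ζ m n · y m n + ω · Σ_n Σ_l x n · x l · (δ n l · Σ_m y m n + ε n l) satisfies C_B(x, y) ≤ C_B(x, y'). -/
import Mathlib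


/-- Optimality of the argmin-based assignment plan (Lemma 1 of the paper). -/
theorem stmt_0 {S CLI : Type*} [Fintype S] [Fintype CLI]
    (ζ : CLI → S → ℝ) (δ ε : S → S → ℝ) (ω : ℝ)
    (hζ : ∀ m n, 0 ≤ ζ m n) (hδ : ∀ n l, 0 ≤ δ n l) (hε : ∀ n l, 0 ≤ ε n l)
    (hω : 0 ≤ ω)
    (x : S → ℝ) (hx : ∀ n, x n = 0 ∨ x n = 1) (hx1 : ∃ n, x n = 1)
    (y y' : CLI → S → ℝ)
    (hy01 : ∀ m n, y m n = 0 ∨ y m n = 1)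
    (hysum : ∀ m, ∑ n, y m n = 1)
    (hyle : ∀ m n, y m n ≤ x n)
    -- y assigns each client to an argmin of ω·(Σ_{l : x l = 1} δ n l) + ζ m n over placed nodes
    (hymin : ∀ m n, y m n = 1 → ∀ n', x n' = 1 →
      ω * (∑ l, x l * δ n l) + ζ m n ≤ ω * (∑ l, x l * δ n' l) + ζ m n')
    (hy'01 : ∀ m n, y' m n = 0 ∨ y' m n = 1)
    (hy'sum : ∀ m, ∑ n, y' m n = 1)
    (hy'le : ∀ m n, y' m n ≤ x n) :
    (∑ m, ∑ n, ζ m n * y m n) +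
      ω * ∑ n, ∑ l, x n * x l * (δ n l * (∑ m, y m n) + ε n l) ≤
    (∑ m, ∑ n, ζ m n * y' m n) +
      ω * ∑ n, ∑ l, x n * x l * (δ n l * (∑ m, y' m n) + ε n l) := by
  classical
  set F : CLI → S → ℝ := fun m n => ω * (∑ l, x l * δ n l) + ζ m n with hF
  -- x n * z m n = z m n for feasible z
  have hxz : ∀ (z : CLI → S → ℝ), (∀ m n, z m n = 0 ∨ z m n = 1) →
      (∀ m n, z m n ≤ x n) → ∀ m n, x n * z m n = z m n := by
    intro z h01 hle m n
    rcases h01 m n with h | h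
    · rw [h, mul_zero]
    · rcases hx n with hxn | hxn
      · have := hle m n; rw [h, hxn] at this; linarith
      · rw [hxn, one_mul]
  -- extract the unique assigned node
  have pick : ∀ (z : CLI → S → ℝ), (∀ m n, z m n = 0 ∨ z m n = 1) →
      (∀ m, ∑ n, z m n = 1) →
      ∀ m, ∃ n₀, z m n₀ = 1 ∧ ∀ n, n ≠ n₀ → z m n = 0 := by
    intro z h01 hsum m
    have hne : ∑ n, z m n ≠ 0 := by rw [hsum m]; norm_num
    obtain ⟨n₀, _, hn₀⟩ := Finset.exists_ne_zero_of_sum_ne_zero hne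
    have h1 : z m n₀ = 1 := (h01 m n₀).resolve_left hn₀
    refine ⟨n₀, h1, ?_⟩
    have hsplit : z m n₀ + ∑ n ∈ Finset.univ.erase n₀, z m n = 1 := by
      rw [Finset.add_sum_erase _ _ (Finset.mem_univ n₀)]; exact hsum m
    have hzero : ∑ n ∈ Finset.univ.erase n₀, z m n = 0 := by linarith [hsplit, h1]
    intro n hn
    have hnonneg : ∀ n ∈ Finset.univ.erase n₀, 0 ≤ z m n := by
      intro n _; rcases h01 m n with h | h <;> rw [h] <;> norm_num
    have := (Finset.sum_eq_zero_iff_of_nonneg hnonneg).mp hzero n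
      (Finset.mem_erase.mpr ⟨hn, Finset.mem_univ n⟩)
    exact this
  -- total cost rewrite
  have key : ∀ (z : CLI → S → ℝ), (∀ m n, z m n = 0 ∨ z m n = 1) →
      (∀ m n, z m n ≤ x n) →
      (∑ m, ∑ n, ζ m n * z m n) +
        ω * ∑ n, ∑ l, x n * x l * (δ n l * (∑ m, z m n) + ε n l)
      = (∑ m, ∑ n, F m n * z m n) + ω * ∑ n, ∑ l, x n * x l * ε n l := by
    intro z h01 hle
    have h1 : ∑ n, ∑ l, x n * x l * (δ n l * (∑ m, z m n) + ε n l)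
        = (∑ n, (∑ l, x l * δ n l) * ∑ m, z m n) + ∑ n, ∑ l, x n * x l * ε n l := by
      rw [← Finset.sum_add_distrib]
      refine Finset.sum_congr rfl fun n _ => ?_
      have hx' : x n * (∑ m, z m n) = ∑ m, z m n := by
        rw [Finset.mul_sum]
        exact Finset.sum_congr rfl fun m _ => hxz z h01 hle m n
      calc ∑ l, x n * x l * (δ n l * (∑ m, z m n) + ε n l)
          = ∑ l, (x l * δ n l * (x n * ∑ m, z m n) + x n * x l * ε n l) := by
            refine Finset.sum_congr rfl fun l _ => by ring
        _ = ∑ l, (x l * δ n l * (∑ m, z m n) + x n * x l * ε n l) := by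
            rw [hx']
        _ = (∑ l, x l * δ n l) * (∑ m, z m n) + ∑ l, x n * x l * ε n l := by
            rw [Finset.sum_add_distrib, Finset.sum_mul]
    have h2 : ∑ n, (∑ l, x l * δ n l) * ∑ m, z m n
        = ∑ m, ∑ n, (∑ l, x l * δ n l) * z m n := by
      rw [Finset.sum_comm]
      refine Finset.sum_congr rfl fun n _ => ?_
      rw [Finset.mul_sum]
    rw [h1, h2, mul_add]
    have h3 : ∑ m, ∑ n, F m n * z m n
        = ∑ m, ∑ n, ζ m n * z m n + ω * ∑ m, ∑ n, (∑ l, x l * δ n l) * z m n := by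
      rw [Finset.mul_sum, ← Finset.sum_add_distrib]
      refine Finset.sum_congr rfl fun m _ => ?_
      rw [Finset.mul_sum, ← Finset.sum_add_distrib]
      refine Finset.sum_congr rfl fun n _ => ?_
      simp only [hF]; ring
    rw [h3]; ring
  rw [key y hy01 hyle, key y' hy'01 hy'le]
  have main : ∑ m, ∑ n, F m n * y m n ≤ ∑ m, ∑ n, F m n * y' m n := by
    refine Finset.sum_le_sum fun m _ => ?_
    obtain ⟨n₀, hn₀1, hn₀0⟩ := pick y hy01 hysum m
    obtain ⟨n₁, hn₁1, hn₁0⟩ := pick y' hy'01 hy'sum m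
    have hv : ∑ n, F m n * y m n = F m n₀ := by
      rw [Finset.sum_eq_single n₀]
      · rw [hn₀1, mul_one]
      · intro n _ hn; rw [hn₀0 n hn, mul_zero]
      · intro h; exact absurd (Finset.mem_univ n₀) h
    have hv' : ∑ n, F m n * y' m n = F m n₁ := by
      rw [Finset.sum_eq_single n₁]
      · rw [hn₁1, mul_one]
      · intro n _ hn; rw [hn₁0 n hn, mul_zero]
      · intro h; exact absurd (Finset.mem_univ n₁) h
    rw [hv, hv']
    have hxn₁ : x n₁ = 1 := by
      rcases hx n₁ with h | h
      · have := hy'le m n₁; rw [hn₁1, h] at this; linarith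
      · exact h
    exact hymin m n₀ hn₀1 n₁ hxn₁
  linarith
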